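/- Let n ≥ 1, let a_{i0} ≥ 0 and a_{ij} ≥ 0 for i,j = 1,…,n, and let π₁,…,πₙ > 0 be such that the matrix B with entries B_{ij} = π_i a_{ij} is symmetric and positive definite, with smallest eigenvalue λ₀ > 0. Define the fluid-mixture diffusion matrix A(u) with entries A_{ij}(u) = δ_{ij} a_{i0} + a_{ij} u_i and the weighted Boltzmann entropy h(u) = Σ_{i=1}^n π_i(u_i(log u_i − 1) + 1), whose Hessian is h''(u) = diag(π_i/u_i). Then for all u ∈ (0,∞)ⁿ and all z ∈ ℝⁿ one has zᵀ h''(u) A(u) z = Σ_{i=1}^n π_i a_{i0} z_i²/u_i + zᵀ B z ≥ λ₀ |z|². -/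

import Mathlib

open Matrix in
private lemma quad_lower_bound {n : ℕ} (B : Matrix (Fin n) (Fin n) ℝ) (hB : B.IsHermitian)
    (lam0 : ℝ) (hle : ∀ i, lam0 ≤ hB.eigenvalues i) (z : Fin n → ℝ) :
    lam0 * ∑ i, z i ^ 2 ≤ z ⬝ᵥ B *ᵥ z := by
  set U : Matrix (Fin n) (Fin n) ℝ := (hB.eigenvectorUnitary : Matrix (Fin n) (Fin n) ℝ) with hU
  have hU1 : U * star U = 1 := Matrix.mem_unitaryGroup_iff.mp hB.eigenvectorUnitary.2
  set y : Fin n → ℝ := star U *ᵥ z with hy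
  have hstar : (star U : Matrix (Fin n) (Fin n) ℝ) = Uᵀ :=
    conjTranspose_eq_transpose_of_trivial U
  have hkey : ∀ w : Fin n → ℝ, z ⬝ᵥ (U *ᵥ w) = y ⬝ᵥ w := by
    intro w
    rw [dotProduct_mulVec, hy, hstar, mulVec_transpose]
  have hzz : z ⬝ᵥ z = y ⬝ᵥ y := by
    calc z ⬝ᵥ z = z ⬝ᵥ ((U * star U) *ᵥ z) := by rw [hU1, one_mulVec]
    _ = y ⬝ᵥ y := by rw [← mulVec_mulVec, hkey]
  have hform : z ⬝ᵥ B *ᵥ z = ∑ i, hB.eigenvalues i * y i ^ 2 := by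
    calc z ⬝ᵥ B *ᵥ z
        = z ⬝ᵥ (U *ᵥ (diagonal (RCLike.ofReal ∘ hB.eigenvalues) *ᵥ y)) := by
          conv_lhs => rw [hB.spectral_theorem, Unitary.conjStarAlgAut_apply]
          rw [← hU, ← mulVec_mulVec, ← mulVec_mulVec, ← hy]
      _ = ∑ i, hB.eigenvalues i * y i ^ 2 := by
          rw [hkey]
          simp [dotProduct, mulVec_diagonal]
          congr 1; ext i; ring
  rw [hform]
  have hzy : ∑ i, z i ^ 2 = ∑ i, y i ^ 2 := by simpa [dotProduct, sq] using hzz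
  rw [hzy, Finset.mul_sum]
  exact Finset.sum_le_sum fun i _ => mul_le_mul_of_nonneg_right (hle i) (sq_nonneg _)

/-- Coercivity for the fluid-mixture model: with `A_{ij}(u) = δ_{ij} a_{i0} + a_{ij} u_i`,
`h''(u) = diag(π_i/u_i)`, and `B = (π_i a_{ij})` symmetric positive definite with
smallest eigenvalue `λ₀ > 0`, one has
`zᵀ h''(u) A(u) z = ∑_i π_i a_{i0} z_i²/u_i + zᵀ B z ≥ λ₀ |z|²`. -/
theorem fluid_mixture_coercivity
    (n : ℕ) (hn : 1 ≤ n) (a0 : Fin n → ℝ) (a : Fin n → Fin n → ℝ) (p : Fin n → ℝ)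
    (ha0 : ∀ i, 0 ≤ a0 i) (ha : ∀ i j, 0 ≤ a i j) (hp : ∀ i, 0 < p i)
    (B : Matrix (Fin n) (Fin n) ℝ) (hBdef : ∀ i j, B i j = p i * a i j)
    (hB : B.IsHermitian) (hBpd : B.PosDef)
    (lam0 : ℝ)
    (hlam0 : lam0 = Finset.univ.inf' (Finset.univ_nonempty_iff.mpr ⟨⟨0, hn⟩⟩) hB.eigenvalues)
    (hlam0pos : 0 < lam0)
    (u z : Fin n → ℝ) (hu : ∀ i, 0 < u i) :
    (∑ i, ∑ j, z i * ((p i / u i) * ((if i = j then a0 i else 0) + a i j * u i)) * z j) =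
        (∑ i, p i * a0 i * z i ^ 2 / u i) + ∑ i, ∑ j, p i * a i j * z i * z j ∧
      lam0 * ∑ i, z i ^ 2 ≤
        ∑ i, ∑ j, z i * ((p i / u i) * ((if i = j then a0 i else 0) + a i j * u i)) * z j := by
  have heq : (∑ i, ∑ j, z i * ((p i / u i) * ((if i = j then a0 i else 0) + a i j * u i)) * z j)
      = (∑ i, p i * a0 i * z i ^ 2 / u i) + ∑ i, ∑ j, p i * a i j * z i * z j := by
    rw [← Finset.sum_add_distrib]
    refine Finset.sum_congr rfl fun i _ => ?_
    have hui : u i ≠ 0 := (hu i).ne'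
    calc ∑ j, z i * ((p i / u i) * ((if i = j then a0 i else 0) + a i j * u i)) * z j
        = ∑ j, ((if i = j then p i * a0 i * z i ^ 2 / u i else 0) + p i * a i j * z i * z j) := by
          refine Finset.sum_congr rfl fun j _ => ?_
          split
          · rename_i h; subst h; field_simp
          · field_simp; ring
      _ = (p i * a0 i * z i ^ 2 / u i) + ∑ j, p i * a i j * z i * z j := by
          rw [Finset.sum_add_distrib, Finset.sum_ite_eq, if_pos (Finset.mem_univ i)]
  refine ⟨heq, ?_⟩
  rw [heq]
  have hB2 : (∑ i, ∑ j, p i * a i j * z i * z j) = dotProduct z (B.mulVec z) := by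
    simp only [dotProduct, Matrix.mulVec, Finset.mul_sum, hBdef]
    exact Finset.sum_congr rfl fun i _ => Finset.sum_congr rfl fun j _ => by ring
  have hfirst : 0 ≤ ∑ i, p i * a0 i * z i ^ 2 / u i :=
    Finset.sum_nonneg fun i _ => div_nonneg
      (mul_nonneg (mul_nonneg (hp i).le (ha0 i)) (sq_nonneg _)) (hu i).le
  have hle : ∀ i, lam0 ≤ hB.eigenvalues i := fun i =>
    hlam0 ▸ Finset.inf'_le _ (Finset.mem_univ i)
  have := quad_lower_bound B hB lam0 hle z
  rw [← hB2] at this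
  linarith
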